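/- arXiv:1004.1574 — 2 statements merged into one kernel-verified Lean document; each statement's English description precedes it below -/
import Mathlib

section
/- Let $(X_k)_{k=0}^n$ be an adapted nonnegative integrable process with Snell envelope $U$ defined by $U_n=X_n$ and $U_k=\max(E(U_{k+1}\mid\mathcal{F}_k),X_k)$ for $k<n$. Then $\tau^*=\min\{k\le n: U_k=X_k\}$ is a stopping time and $E[X_{\tau^*}]=U_0=\max_{\tau\in\mathcal{T}_n}E[X_\tau]$. -/
open MeasureTheory Filter

/-- The first time the Snell envelope `U` meets `X`, `τ* = min{k ≤ n : U k = X k}`,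
is an optimal stopping time: it is a stopping time and `E[X_{τ*}] = E[U 0]`,
which is the maximum of `E[X_τ]` over all stopping times `τ ≤ n`. -/
theorem stmt_9 {Ω : Type*} {m : MeasurableSpace Ω} (μ : Measure Ω)
    [IsProbabilityMeasure μ] (ℱ : Filtration ℕ m) (n : ℕ)
    (X : ℕ → Ω → ℝ) (hXad : Adapted ℱ X)
    (hXpos : ∀ k ω, 0 ≤ X k ω) (hXint : ∀ k, Integrable (X k) μ)
    (U : ℕ → Ω → ℝ) (hUn : U n = X n)
    (hUk : ∀ k < n, U k = fun ω => max ((μ[U (k + 1)|ℱ k]) ω) (X k ω))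
    (τstar : Ω → ℕ) (hτstar : ∀ ω, τstar ω = sInf {k | U k ω = X k ω}) :
    IsStoppingTime ℱ (fun ω => (τstar ω : WithTop ℕ)) ∧ (∀ ω, τstar ω ≤ n) ∧
      (∫ ω, X (τstar ω) ω ∂μ) = (∫ ω, U 0 ω ∂μ) ∧
      IsGreatest {r : ℝ | ∃ τ : Ω → ℕ, IsStoppingTime ℱ (fun ω => (τ ω : WithTop ℕ)) ∧ (∀ ω, τ ω ≤ n) ∧
          r = ∫ ω, X (τ ω) ω ∂μ}
        (∫ ω, U 0 ω ∂μ) := by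
  have hSnon : ∀ ω, n ∈ {k | U k ω = X k ω} := fun ω => congrFun hUn ω
  have hτle : ∀ ω, τstar ω ≤ n := fun ω => by
    rw [hτstar ω]; exact Nat.sInf_le (hSnon ω)
  have hτmem : ∀ ω, U (τstar ω) ω = X (τstar ω) ω := fun ω => by
    have h := Nat.sInf_mem (⟨n, hSnon ω⟩ : {k | U k ω = X k ω}.Nonempty)
    rw [hτstar ω]; exact h
  -- measurability of U up to time n
  have hUmeas : ∀ k, k ≤ n → StronglyMeasurable[ℱ k] (U k) := by
    intro k hk
    rcases lt_or_eq_of_le hk with hk' | hk'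
    · rw [hUk k hk']
      have h2 : StronglyMeasurable[ℱ k] (μ[U (k + 1)|ℱ k] ⊔ X k) := by
        letI : MeasurableSpace Ω := ℱ k
        exact stronglyMeasurable_condExp.sup (hXad k).stronglyMeasurable
      have : (μ[U (k + 1)|ℱ k] ⊔ X k) = fun ω => max ((μ[U (k + 1)|ℱ k]) ω) (X k ω) := by
        funext ω; simp [Pi.sup_apply]
      rwa [this] at h2
    · rw [hk', hUn]; exact (hXad n).stronglyMeasurable
  -- integrability of U up to time n
  have hUint : ∀ k, k ≤ n → Integrable (U k) μ := by
    have key : ∀ d k, k + d = n → Integrable (U k) μ := by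
      intro d
      induction d with
      | zero =>
        intro k hk
        rw [(by omega : k = n), hUn]; exact hXint n
      | succ d ih =>
        intro k hk
        rw [hUk k (by omega)]
        have h1 : Integrable (μ[U (k + 1)|ℱ k]) μ := integrable_condExp
        have h2 := h1.sup (hXint k)
        have : (μ[U (k + 1)|ℱ k] ⊔ X k) = fun ω => max ((μ[U (k + 1)|ℱ k]) ω) (X k ω) := by
          funext ω; simp [Pi.sup_apply]
        rwa [this] at h2
    intro k hk; exact key (n - k) k (by omega)
  have hXleU : ∀ k, k ≤ n → ∀ ω, X k ω ≤ U k ω := by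
    intro k hk ω
    rcases lt_or_eq_of_le hk with hk' | hk'
    · rw [hUk k hk']; exact le_max_right _ _
    · rw [hk', hUn]
  -- the stopping time property
  have hst : IsStoppingTime ℱ (fun ω => (τstar ω : WithTop ℕ)) := by
    intro k
    suffices hsuff : MeasurableSet[ℱ k] {ω | τstar ω ≤ k} by
      convert hsuff using 1; ext ω; simp
    rcases le_or_gt n k with hk | hk
    · have : {ω | τstar ω ≤ k} = Set.univ := by
        ext ω; simp [le_trans (hτle ω) hk]
      rw [this]; exact MeasurableSet.univ
    · have hset : {ω | τstar ω ≤ k} = ⋃ j ∈ Set.Iic k, {ω | U j ω = X j ω} := by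
        ext ω
        simp only [Set.mem_setOf_eq, Set.mem_iUnion, Set.mem_Iic, exists_prop]
        constructor
        · intro h
          exact ⟨τstar ω, h, hτmem ω⟩
        · intro ⟨j, hj, hUX⟩
          rw [hτstar ω]
          exact le_trans (Nat.sInf_le hUX) hj
      rw [hset]
      refine MeasurableSet.biUnion (Set.to_countable _) fun j hj => ?_
      have hjk : j ≤ k := hj
      have hjn : j ≤ n := le_trans hjk hk.le
      exact ℱ.mono hjk _ ((hUmeas j hjn).measurableSet_eq_fun (hXad j).stronglyMeasurable)
  -- the truncated Snell envelope, defined for all times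
  set V : ℕ → Ω → ℝ := fun k => U (min k n) with hVdef
  have hVeq : ∀ k, k ≤ n → V k = U k := fun k hk => by simp [hVdef, min_eq_left hk]
  have hVint : ∀ k, Integrable (V k) μ := fun k => hUint _ (min_le_right _ _)
  have hVad : StronglyAdapted ℱ V := fun k =>
    ((hUmeas _ (min_le_right k n)).mono (ℱ.mono (min_le_left k n)))
  -- on {k < τstar}, U k coincides with the conditional expectation of U (k+1)
  have hAeq : ∀ k, k < n → ∀ ω, k < τstar ω → (μ[U (k + 1)|ℱ k]) ω = U k ω := by
    intro k hk ω hω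
    have hne : U k ω ≠ X k ω := by
      intro h
      have : k ∈ {j | U j ω = X j ω} := h
      have := Nat.sInf_le this
      rw [← hτstar ω] at this
      omega
    rw [hUk k hk] at hne ⊢
    simp only [max_def] at hne ⊢
    by_cases hle : (μ[U (k + 1)|ℱ k]) ω ≤ X k ω
    · simp [hle] at hne
    · simp [hle]
  -- V is a supermartingale
  have hVsuper : Supermartingale V ℱ μ := by
    refine supermartingale_nat hVad hVint fun k => ?_
    rcases lt_or_ge k n with hk | hk
    · have h1 : V (k + 1) = U (k + 1) := hVeq _ (by omega)
      have h2 : V k = U k := hVeq _ (by omega)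
      rw [h1, h2]
      refine Eventually.of_forall fun ω => ?_
      rw [hUk k hk]
      exact le_max_left _ _
    · have h1 : V (k + 1) = U n := by simp [hVdef, min_eq_right (by omega : n ≤ k + 1)]
      have h2 : V k = U n := by simp [hVdef, min_eq_right hk]
      rw [h1, h2]
      rw [condExp_of_stronglyMeasurable (ℱ.le k)
        ((hUmeas n le_rfl).mono (ℱ.mono hk)) (hUint n le_rfl)]
  -- the key telescoping identity
  have hkey : ∀ k, k ≤ n → (∫ ω, V (min (τstar ω) k) ω ∂μ) = ∫ ω, U 0 ω ∂μ := by
    intro k hk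
    induction k with
    | zero => simp [hVeq 0 (Nat.zero_le n)]
    | succ k ih =>
      have hkn : k < n := by omega
      have ihv := ih (by omega)
      set A : Set Ω := {ω | k < τstar ω} with hAdef
      have hA : MeasurableSet[ℱ k] A := by
        have : A = {ω | (τstar ω : WithTop ℕ) ≤ k}ᶜ := by
          ext ω; simp only [hAdef, Set.mem_setOf_eq, Set.mem_compl_iff, not_le, Nat.cast_lt]
        rw [this]; exact (hst k).compl
      have hAm : MeasurableSet A := ℱ.le k _ hA
      -- pointwise decomposition
      have hpt : ∀ ω, V (min (τstar ω) (k + 1)) ω =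
          V (min (τstar ω) k) ω + A.indicator (fun ω => V (k + 1) ω - V k ω) ω := by
        intro ω
        by_cases h : k < τstar ω
        · rw [Set.indicator_of_mem (show ω ∈ A from h), min_eq_right (by omega : k + 1 ≤ τstar ω),
            min_eq_right h.le]
          ring
        · rw [Set.indicator_of_notMem (show ω ∉ A from h), min_eq_left (by omega : τstar ω ≤ k + 1),
            min_eq_left (by omega : τstar ω ≤ k)]
          ring
      have hint1 : Integrable (fun ω => V (min (τstar ω) k) ω) μ := by
        have := integrable_stoppedValue (ι := ℕ) (hst.min_const k) hVint
          (N := n) (fun ω => le_trans (min_le_right _ _) (by exact_mod_cast (by omega : k ≤ n)))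
        refine this.congr (Eventually.of_forall fun ω => ?_)
        simp only [stoppedValue]
        rfl
      have hint2 : Integrable (A.indicator (fun ω => V (k + 1) ω - V k ω)) μ :=
        (((hVint (k + 1)).sub (hVint k)).indicator hAm)
      calc (∫ ω, V (min (τstar ω) (k + 1)) ω ∂μ)
          = ∫ ω, (V (min (τstar ω) k) ω
              + A.indicator (fun ω => V (k + 1) ω - V k ω) ω) ∂μ := by
            exact integral_congr_ae (Eventually.of_forall hpt)
        _ = (∫ ω, V (min (τstar ω) k) ω ∂μ)
              + ∫ ω, A.indicator (fun ω => V (k + 1) ω - V k ω) ω ∂μ :=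
            integral_add hint1 hint2
        _ = ∫ ω, U 0 ω ∂μ := by
            have hzero : (∫ ω, A.indicator (fun ω => V (k + 1) ω - V k ω) ω ∂μ) = 0 := by
              rw [integral_indicator hAm]
              have hsub : (∫ ω in A, (V (k + 1) ω - V k ω) ∂μ)
                  = (∫ ω in A, V (k + 1) ω ∂μ) - ∫ ω in A, V k ω ∂μ :=
                integral_sub ((hVint (k + 1)).integrableOn) ((hVint k).integrableOn)
              rw [hsub]
              have hce : (∫ ω in A, V (k + 1) ω ∂μ)
                  = ∫ ω in A, (μ[V (k + 1)|ℱ k]) ω ∂μ :=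
                (setIntegral_condExp (ℱ.le k) (hVint (k + 1)) hA).symm
              rw [hce]
              have hcongr : (∫ ω in A, (μ[V (k + 1)|ℱ k]) ω ∂μ) = ∫ ω in A, V k ω ∂μ := by
                refine setIntegral_congr_fun hAm fun ω hω => ?_
                have h1 : V (k + 1) = U (k + 1) := hVeq _ (by omega)
                have h2 : V k = U k := hVeq _ (by omega)
                rw [h1, h2]
                exact hAeq k hkn ω hω
              rw [hcongr]
              ring
            rw [hzero, add_zero, ihv]
  -- E[X_{τ*}] = E[U 0]
  have hmain : (∫ ω, X (τstar ω) ω ∂μ) = ∫ ω, U 0 ω ∂μ := by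
    have h1 : (∫ ω, X (τstar ω) ω ∂μ) = ∫ ω, V (min (τstar ω) n) ω ∂μ := by
      refine integral_congr_ae (Eventually.of_forall fun ω => ?_)
      show X (τstar ω) ω = V (min (τstar ω) n) ω
      rw [min_eq_left (hτle ω)]
      have : V (τstar ω) = U (τstar ω) := hVeq _ (hτle ω)
      rw [this, hτmem ω]
    rw [h1, hkey n le_rfl]
  refine ⟨hst, hτle, hmain, ⟨τstar, hst, hτle, hmain.symm⟩, ?_⟩
  -- upper bound over all stopping times
  rintro r ⟨τ, hτ, hτn, rfl⟩
  have hXτint : Integrable (stoppedValue X (fun ω => (τ ω : WithTop ℕ))) μ :=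
    integrable_stoppedValue (ι := ℕ) hτ hXint (N := n) (fun ω => by exact WithTop.coe_le_coe.mpr (hτn ω))
  have hVτint : Integrable (stoppedValue V (fun ω => (τ ω : WithTop ℕ))) μ :=
    integrable_stoppedValue (ι := ℕ) hτ hVint (N := n) (fun ω => by exact WithTop.coe_le_coe.mpr (hτn ω))
  have h1 : (∫ ω, X (τ ω) ω ∂μ) ≤ ∫ ω, stoppedValue V (fun ω => (τ ω : WithTop ℕ)) ω ∂μ := by
    refine integral_mono hXτint hVτint fun ω => ?_
    have := hXleU (τ ω) (hτn ω) ω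
    show X (τ ω) ω ≤ V (τ ω) ω
    simpa [stoppedValue, hVdef, min_eq_left (hτn ω)] using this
  have h2 : (∫ ω, stoppedValue V (fun ω => (τ ω : WithTop ℕ)) ω ∂μ) ≤ ∫ ω, U 0 ω ∂μ := by
    have hsub := hVsuper.neg
    have hmono := hsub.expected_stoppedValue_mono (isStoppingTime_const ℱ 0) hτ
      (fun ω => by exact WithTop.coe_le_coe.mpr (Nat.zero_le _)) (N := n) (fun ω => by exact WithTop.coe_le_coe.mpr (hτn ω))
    have hneg : ∀ σ : Ω → WithTop ℕ, stoppedValue (-V) σ = -(stoppedValue V σ) := by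
      intro σ; funext ω; simp [stoppedValue]
    rw [hneg, hneg] at hmono
    simp only [Pi.neg_apply, integral_neg, neg_le_neg_iff] at hmono
    have h0 : stoppedValue V (fun _ : Ω => WithTop.some (0 : ℕ)) = U 0 := by
      funext ω; show V 0 ω = U 0 ω; simp [hVdef]
    rw [h0] at hmono
    exact hmono
  exact le_trans h1 h2
end

section
/- Fix $n$, an initial capital $x>0$, and define backward value functions $H^{(n)}_k$ by $H^{(n)}_n(y,u^{(1)},\dots,u^{(n)})=(\phi^{(n)}_n(u^{(1)},\dots,u^{(n)})-y)^+$ and, for $k<n$, $H^{(n)}_k(y,u^{(1)},\dots,u^{(k)})=\max\big((\phi^{(n)}_k(u^{(1)},\dots,u^{(k)})-y)^+,\ \frac{1}{d+1}\min_{u\in K_{J_n}}\sum_{i=1}^{d+1}H^{(n)}_{k+1}(y(1+\langle u,w^{n,i}\rangle),u^{(1)},\dots,u^{(k)},w^{(i)})\big)$. Then for every admissible self-financing strategy $\pi$ with initial capital at most $x$ in the $n$-step multinomial market, $R_n(\pi)\ge H^{(n)}_0(x)$, and the strategy $\tilde\pi$ defined by choosing at each step a minimizer $h^{(n)}_k(V^{\tilde\pi}(k),\xi^{(1)},\dots,\xi^{(k)})\in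 K_{J_n}$ achieves $R_n(\tilde\pi)=H^{(n)}_0(x)$; hence $R_n(x)=H^{(n)}_0(x)$. -/
open MeasureTheory
open scoped ENNReal

private lemma aux_sum_update {n d : ℕ} (k : Fin n) (h : (Fin n → Fin (d+1)) → ℝ) :
    ∑ ω : Fin n → Fin (d+1), ∑ i : Fin (d+1), h (Function.update ω k i)
      = (d+1 : ℝ) * ∑ ω : Fin n → Fin (d+1), h ω := by
  classical
  have hinv : Function.Involutive
      (fun p : (Fin n → Fin (d+1)) × Fin (d+1) => (Function.update p.1 k p.2, p.1 k)) := by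
    rintro ⟨ω, i⟩
    simp [Function.update_idem]
  have key : ∑ p : (Fin n → Fin (d+1)) × Fin (d+1), h (Function.update p.1 k p.2)
      = ∑ p : (Fin n → Fin (d+1)) × Fin (d+1), h p.1 :=
    Fintype.sum_bijective _ hinv.bijective _ _ (fun p => by simp)
  calc ∑ ω : Fin n → Fin (d+1), ∑ i : Fin (d+1), h (Function.update ω k i)
      = ∑ p : (Fin n → Fin (d+1)) × Fin (d+1), h (Function.update p.1 k p.2) := by
        rw [Fintype.sum_prod_type]
    _ = ∑ p : (Fin n → Fin (d+1)) × Fin (d+1), h p.1 := key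
    _ = (d+1 : ℝ) * ∑ ω : Fin n → Fin (d+1), h ω := by
        rw [Fintype.sum_prod_type]
        simp [Finset.sum_const, Finset.mul_sum, mul_comm]

private lemma aux_meas_of_inv {n d k : ℕ} (m : MeasurableSpace (Fin n → Fin (d+1)))
    (hm : m = ⨆ i : {i : Fin n // (i : ℕ) < k}, MeasurableSpace.comap (fun ω => ω i.1) ⊤)
    (A : Set (Fin n → Fin (d+1)))
    (hA : ∀ ω ω', (∀ i : Fin n, (i : ℕ) < k → ω i = ω' i) → ω ∈ A → ω' ∈ A) :
    MeasurableSet[m] A := by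
  subst hm
  classical
  have hrw : A = ⋃ ω₀ ∈ A, {ω | ∀ i : Fin n, (i : ℕ) < k → ω i = ω₀ i} := by
    ext ω
    simp only [Set.mem_iUnion, Set.mem_setOf_eq]
    constructor
    · exact fun h => ⟨ω, h, fun i _ => rfl⟩
    · rintro ⟨ω₀, h₀, hag⟩
      exact hA ω₀ ω (fun i hi => (hag i hi).symm) h₀
  rw [hrw]
  refine MeasurableSet.biUnion (Set.to_countable _) (fun ω₀ _ => ?_)
  have hrw2 : {ω : Fin n → Fin (d+1) | ∀ i : Fin n, (i : ℕ) < k → ω i = ω₀ i}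
      = ⋂ i : {i : Fin n // (i : ℕ) < k}, (fun ω : Fin n → Fin (d+1) => ω i.1) ⁻¹' {ω₀ i.1} := by
    ext ω
    simp only [Set.mem_iInter, Set.mem_preimage, Set.mem_singleton_iff, Set.mem_setOf_eq,
      Subtype.forall]
  rw [hrw2]
  exact MeasurableSet.iInter fun i =>
    (le_iSup (fun i : {i : Fin n // (i : ℕ) < k} =>
      MeasurableSpace.comap (fun ω : Fin n → Fin (d+1) => ω i.1) ⊤) i) _ ⟨{ω₀ i.1}, trivial, rfl⟩

private lemma aux_inv_of_meas {n d k : ℕ} (m : MeasurableSpace (Fin n → Fin (d+1)))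
    (hm : m = ⨆ i : {i : Fin n // (i : ℕ) < k}, MeasurableSpace.comap (fun ω => ω i.1) ⊤)
    (A : Set (Fin n → Fin (d+1))) (hA : MeasurableSet[m] A)
    (ω ω' : Fin n → Fin (d+1)) (hag : ∀ i : Fin n, (i : ℕ) < k → ω i = ω' i) :
    ω ∈ A ↔ ω' ∈ A := by
  subst hm
  let m' : MeasurableSpace (Fin n → Fin (d+1)) :=
    { MeasurableSet' := fun B => ∀ σ σ', (∀ i : Fin n, (i : ℕ) < k → σ i = σ' i) → (σ ∈ B ↔ σ' ∈ B)
      measurableSet_empty := fun σ σ' _ => Iff.rfl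
      measurableSet_compl := fun B hB σ σ' h => by
        have := hB σ σ' h
        simp only [Set.mem_compl_iff]
        exact not_congr this
      measurableSet_iUnion := fun f hf σ σ' h => by
        simp only [Set.mem_iUnion]
        exact exists_congr fun j => hf j σ σ' h }
  have hle : (⨆ i : {i : Fin n // (i : ℕ) < k},
      MeasurableSpace.comap (fun ω : Fin n → Fin (d+1) => ω i.1) ⊤) ≤ m' := by
    refine iSup_le fun i => ?_
    rintro B ⟨s, -, rfl⟩ σ σ' h
    simp only [Set.mem_preimage, h i.1 i.2]
  exact hle A hA ω ω' hag

private lemma aux_sInf_diff {α : Type*} (K : Set α) (hKne : K.Nonempty) (f g : α → ℝ)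
    (hbf : BddBelow {z | ∃ u ∈ K, z = f u}) (hbg : BddBelow {z | ∃ u ∈ K, z = g u})
    (ε : ℝ) (h : ∀ u ∈ K, |f u - g u| ≤ ε) :
    |sInf {z | ∃ u ∈ K, z = f u} - sInf {z | ∃ u ∈ K, z = g u}| ≤ ε := by
  obtain ⟨u₀, hu₀⟩ := hKne
  rw [abs_sub_le_iff]
  constructor
  · have : sInf {z | ∃ u ∈ K, z = f u} - ε ≤ sInf {z | ∃ u ∈ K, z = g u} := by
      refine le_csInf ⟨g u₀, u₀, hu₀, rfl⟩ ?_
      rintro z ⟨u, hu, rfl⟩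
      have h1 : sInf {z | ∃ u ∈ K, z = f u} ≤ f u := csInf_le hbf ⟨u, hu, rfl⟩
      have h2 : f u - g u ≤ ε := (abs_le.1 (h u hu)).2
      linarith
    linarith
  · have : sInf {z | ∃ u ∈ K, z = g u} - ε ≤ sInf {z | ∃ u ∈ K, z = f u} := by
      refine le_csInf ⟨f u₀, u₀, hu₀, rfl⟩ ?_
      rintro z ⟨u, hu, rfl⟩
      have h1 : sInf {z | ∃ u ∈ K, z = g u} ≤ g u := csInf_le hbg ⟨u, hu, rfl⟩
      have h2 : g u - f u ≤ ε := by
        have := (abs_le.1 (h u hu)).1; linarith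
      linarith
    linarith

/-- Dynamic programming for the shortfall risk in the `n`-step multinomial market:
every admissible strategy with initial capital at most `x` has shortfall risk at
least `H⁽ⁿ⁾₀(x)`, and a strategy built from stepwise minimizers attains
`H⁽ⁿ⁾₀(x)`; hence `Rₙ(x) = H⁽ⁿ⁾₀(x)`. -/
theorem stmt_19 (d n : ℕ) (hn : 0 < n) (T x : ℝ) (hT : 0 < T) (hx : 0 < x)
    (w : Fin (d + 1) → Fin d → ℝ) (b : Fin d → ℝ) (σm : Matrix (Fin d) (Fin d) ℝ)
    (wn : Fin (d + 1) → Fin d → ℝ)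
    (hwn : ∀ i j, wn i j = T / n * b j + Real.sqrt (T / n) * ∑ l, σm j l * w i l)
    (K : Set (Fin d → ℝ)) (hK : K = {u | ∀ i, -1 ≤ ∑ j, u j * wn i j})
    (hKne : K.Nonempty) (hKcomp : IsCompact K) (hKconv : Convex ℝ K)
    (μ : Measure (Fin n → Fin (d + 1)))
    (hμ : μ = (((d : ℝ≥0∞) + 1) ^ n)⁻¹ • Measure.count)
    (ℱ : Filtration ℕ (⊤ : MeasurableSpace (Fin n → Fin (d + 1))))
    (hℱ : ∀ k, (ℱ k : MeasurableSpace (Fin n → Fin (d + 1))) =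
      ⨆ i : {i : Fin n // (i : ℕ) < k}, MeasurableSpace.comap (fun ω => ω i.1) ⊤)
    (Y : ℕ → (Fin n → Fin (d + 1)) → ℝ) (hYpos : ∀ k ω, 0 ≤ Y k ω)
    (hYad : ∀ k, k ≤ n → ∀ ω ω',
      (∀ i : Fin n, (i : ℕ) < k → ω i = ω' i) → Y k ω = Y k ω')
    (H : ℕ → ℝ → (Fin n → Fin (d + 1)) → ℝ)
    (hHn : ∀ y ω, H n y ω = max (Y n ω - y) 0)
    (hHk : ∀ k (hk : k < n), ∀ y ω, H k y ω =
      max (max (Y k ω - y) 0)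
        ((1 / (d + 1 : ℝ)) * sInf {z : ℝ | ∃ u ∈ K, z =
          ∑ i : Fin (d + 1), H (k + 1) (y * (1 + ∑ j, u j * wn i j))
            (Function.update ω ⟨k, hk⟩ i)})) :
    -- every admissible strategy with initial capital ≤ x has shortfall risk ≥ H₀(x)
    (∀ (ρ : ℕ → (Fin n → Fin (d + 1)) → Fin d → ℝ)
        (V : ℕ → (Fin n → Fin (d + 1)) → ℝ),
      (∀ k, Measurable[ℱ k] (ρ k)) → (∀ k ω, ρ k ω ∈ K) →
      (∃ x₀ : ℝ, x₀ ≤ x ∧ ∀ ω, V 0 ω = x₀) →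
      (∀ k (hk : k < n), ∀ ω,
        V (k + 1) ω = V k ω * (1 + ∑ j, ρ k ω j * wn (ω ⟨k, hk⟩) j)) →
      ∃ τ : (Fin n → Fin (d + 1)) → ℕ, IsStoppingTime ℱ (fun ω => (τ ω : WithTop ℕ)) ∧ (∀ ω, τ ω ≤ n) ∧
        H 0 x (fun _ => 0) ≤ ∫ ω, max (Y (τ ω) ω - V (τ ω) ω) 0 ∂μ) ∧
    -- the strategy built from stepwise minimizers attains H₀(x)
    (∃ (ρ : ℕ → (Fin n → Fin (d + 1)) → Fin d → ℝ)
        (V : ℕ → (Fin n → Fin (d + 1)) → ℝ),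
      (∀ k, Measurable[ℱ k] (ρ k)) ∧ (∀ k ω, ρ k ω ∈ K) ∧
      (∀ ω, V 0 ω = x) ∧
      (∀ k (hk : k < n), ∀ ω,
        V (k + 1) ω = V k ω * (1 + ∑ j, ρ k ω j * wn (ω ⟨k, hk⟩) j)) ∧
      (∀ k (hk : k < n), ∀ ω,
        (∑ i : Fin (d + 1), H (k + 1) (V k ω * (1 + ∑ j, ρ k ω j * wn i j))
            (Function.update ω ⟨k, hk⟩ i)) =
          sInf {z : ℝ | ∃ u ∈ K, z =
            ∑ i : Fin (d + 1), H (k + 1) (V k ω * (1 + ∑ j, u j * wn i j))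
              (Function.update ω ⟨k, hk⟩ i)}) ∧
      ∀ τ : (Fin n → Fin (d + 1)) → ℕ, IsStoppingTime ℱ (fun ω => (τ ω : WithTop ℕ)) → (∀ ω, τ ω ≤ n) →
        ∫ ω, max (Y (τ ω) ω - V (τ ω) ω) 0 ∂μ ≤ H 0 x (fun _ => 0)) := by
  classical
  obtain ⟨u₀, hu₀K⟩ := hKne
  have hd1 : (0:ℝ) < (d:ℝ) + 1 := by positivity
  have h0K : ∀ u ∈ K, ∀ i : Fin (d+1), 0 ≤ 1 + ∑ j, u j * wn i j := by
    intro u hu i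
    rw [hK] at hu
    have := hu i
    linarith
  have hH0 : ∀ k, k ≤ n → ∀ y ω, 0 ≤ H k y ω := by
    intro k hk y ω
    rcases eq_or_lt_of_le hk with h | h
    · rw [h, hHn]; exact le_max_right _ _
    · rw [hHk k h]; exact le_trans (le_max_right _ 0) (le_max_left _ _)
  have hbdd : ∀ k (hk : k < n) (y : ℝ) (ω : Fin n → Fin (d+1)),
      BddBelow {z : ℝ | ∃ u ∈ K, z = ∑ i : Fin (d+1),
        H (k+1) (y * (1 + ∑ j, u j * wn i j)) (Function.update ω ⟨k, hk⟩ i)} := by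
    intro k hk y ω
    refine ⟨0, ?_⟩
    rintro z ⟨u, hu, rfl⟩
    exact Finset.sum_nonneg fun i _ => hH0 (k+1) hk _ _
  have hHge : ∀ j, j ≤ n → ∀ (y : ℝ) ω, max (Y j ω - y) 0 ≤ H j y ω := by
    intro j hj y ω
    rcases eq_or_lt_of_le hj with h | h
    · rw [h, hHn]
    · rw [hHk j h]; exact le_max_left _ _
  have Hdep : ∀ j k, k + j = n → ∀ (y : ℝ) (ω ω' : Fin n → Fin (d+1)),
      (∀ i : Fin n, (i:ℕ) < k → ω i = ω' i) → H k y ω = H k y ω' := by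
    intro j
    induction j with
    | zero =>
      intro k hkn y ω ω' hag
      have hk : k = n := by omega
      subst hk
      rw [hHn, hHn, hYad k le_rfl ω ω' hag]
    | succ j ih =>
      intro k hkn y ω ω' hag
      have hk : k < n := by omega
      have hY : Y k ω = Y k ω' := hYad k (le_of_lt hk) ω ω' hag
      have hupd : ∀ (z : ℝ) (i : Fin (d+1)),
          H (k+1) z (Function.update ω ⟨k, hk⟩ i)
            = H (k+1) z (Function.update ω' ⟨k, hk⟩ i) := by
        intro z i
        refine ih (k+1) (by omega) z _ _ ?_
        intro i' hi'
        by_cases hik : i' = (⟨k, hk⟩ : Fin n)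
        · subst hik; simp
        · rw [Function.update_of_ne hik, Function.update_of_ne hik]
          refine hag i' ?_
          have : (i' : ℕ) ≠ k := fun hc => hik (Fin.ext hc)
          omega
      have hset : {z : ℝ | ∃ u ∈ K, z = ∑ i : Fin (d+1),
            H (k+1) (y * (1 + ∑ j, u j * wn i j)) (Function.update ω ⟨k, hk⟩ i)}
          = {z : ℝ | ∃ u ∈ K, z = ∑ i : Fin (d+1),
            H (k+1) (y * (1 + ∑ j, u j * wn i j)) (Function.update ω' ⟨k, hk⟩ i)} := by
        ext z
        constructor
        · rintro ⟨u, hu, rfl⟩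
          exact ⟨u, hu, Finset.sum_congr rfl fun i _ => hupd _ i⟩
        · rintro ⟨u, hu, rfl⟩
          exact ⟨u, hu, Finset.sum_congr rfl fun i _ => (hupd _ i).symm⟩
      rw [hHk k hk, hHk k hk, hY, hset]
  have Hmono : ∀ j k, k + j = n → ∀ (y y' : ℝ) (ω : Fin n → Fin (d+1)), y ≤ y' →
      H k y' ω ≤ H k y ω := by
    intro j
    induction j with
    | zero =>
      intro k hkn y y' ω hyy
      have hk : k = n := by omega
      subst hk
      rw [hHn, hHn]
      exact max_le_max (by linarith) le_rfl
    | succ j ih =>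
      intro k hkn y y' ω hyy
      have hk : k < n := by omega
      rw [hHk k hk, hHk k hk]
      refine max_le_max (max_le_max (by linarith) le_rfl) ?_
      refine mul_le_mul_of_nonneg_left ?_ (by positivity)
      refine le_csInf ⟨_, u₀, hu₀K, rfl⟩ ?_
      rintro z ⟨u, hu, rfl⟩
      refine le_trans (csInf_le (hbdd k hk y' ω) ⟨u, hu, rfl⟩) ?_
      refine Finset.sum_le_sum fun i _ => ?_
      exact ih (k+1) (by omega) _ _ _ (mul_le_mul_of_nonneg_right hyy (h0K u hu i))
  -- a uniform bound on the market factors over K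
  have hfc : Continuous (fun u : Fin d → ℝ => ∑ i : Fin (d+1), (1 + ∑ j, u j * wn i j)) := by
    refine continuous_finset_sum _ fun i _ => ?_
    exact continuous_const.add
      (continuous_finset_sum _ fun j _ => (continuous_apply j).mul continuous_const)
  obtain ⟨uM, huM, hMax⟩ := hKcomp.exists_isMaxOn ⟨u₀, hu₀K⟩ hfc.continuousOn
  set C : ℝ := max (∑ i : Fin (d+1), (1 + ∑ j, uM j * wn i j)) 1 with hCdef
  have hC1 : (1:ℝ) ≤ C := le_max_right _ _
  have hC0 : (0:ℝ) ≤ C := le_trans zero_le_one hC1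
  have hC : ∀ u ∈ K, ∀ i : Fin (d+1), 1 + ∑ j, u j * wn i j ≤ C := by
    intro u hu i
    have h1 : 1 + ∑ j, u j * wn i j ≤ ∑ i' : Fin (d+1), (1 + ∑ j, u j * wn i' j) :=
      Finset.single_le_sum (fun i' _ => h0K u hu i') (Finset.mem_univ i)
    exact h1.trans ((hMax hu).trans (le_max_left _ _))
  have HLip : ∀ j k, k + j = n → ∀ (y y' : ℝ) (ω : Fin n → Fin (d+1)),
      |H k y ω - H k y' ω| ≤ C ^ j * |y - y'| := by
    intro j
    induction j with
    | zero =>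
      intro k hkn y y' ω
      have hk : k = n := by omega
      subst hk
      rw [hHn, hHn, pow_zero, one_mul]
      refine le_trans (abs_max_sub_max_le_abs _ _ _) ?_
      have h1 : Y k ω - y - (Y k ω - y') = y' - y := by ring
      rw [h1, abs_sub_comm]
    | succ j ih =>
      intro k hkn y y' ω
      have hk : k < n := by omega
      have hCp : (1:ℝ) ≤ C ^ (j+1) := one_le_pow₀ hC1
      rw [hHk k hk, hHk k hk]
      refine le_trans (abs_max_sub_max_le_max _ _ _ _) (max_le ?_ ?_)
      · refine le_trans (abs_max_sub_max_le_abs _ _ _) ?_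
        have h1 : Y k ω - y - (Y k ω - y') = y' - y := by ring
        rw [h1, abs_sub_comm]
        nlinarith [abs_nonneg (y - y')]
      · rw [← mul_sub, abs_mul]
        have hquot : |1/((d:ℝ)+1)| = 1/((d:ℝ)+1) := abs_of_pos (by positivity)
        rw [hquot]
        have hdiff : |sInf {z : ℝ | ∃ u ∈ K, z = ∑ i : Fin (d+1),
              H (k+1) (y * (1 + ∑ j, u j * wn i j)) (Function.update ω ⟨k, hk⟩ i)}
            - sInf {z : ℝ | ∃ u ∈ K, z = ∑ i : Fin (d+1),
              H (k+1) (y' * (1 + ∑ j, u j * wn i j)) (Function.update ω ⟨k, hk⟩ i)}|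
            ≤ ((d:ℝ)+1) * (C ^ (j+1) * |y - y'|) := by
          refine aux_sInf_diff K ⟨u₀, hu₀K⟩ _ _ (hbdd k hk y ω) (hbdd k hk y' ω) _ ?_
          intro u hu
          rw [← Finset.sum_sub_distrib]
          refine le_trans (Finset.abs_sum_le_sum_abs _ _) ?_
          have hterm : ∀ i : Fin (d+1),
              |H (k+1) (y * (1 + ∑ j, u j * wn i j)) (Function.update ω ⟨k, hk⟩ i)
                - H (k+1) (y' * (1 + ∑ j, u j * wn i j)) (Function.update ω ⟨k, hk⟩ i)|
              ≤ C ^ (j+1) * |y - y'| := by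
            intro i
            refine le_trans (ih (k+1) (by omega) _ _ _) ?_
            have h2 : |y * (1 + ∑ j, u j * wn i j) - y' * (1 + ∑ j, u j * wn i j)|
                = (1 + ∑ j, u j * wn i j) * |y - y'| := by
              rw [← sub_mul, abs_mul, abs_of_nonneg (h0K u hu i), mul_comm]
            rw [h2, pow_succ]
            have hCj : (0:ℝ) ≤ C ^ j := by positivity
            calc C ^ j * ((1 + ∑ j, u j * wn i j) * |y - y'|)
                ≤ C ^ j * (C * |y - y'|) :=
                  mul_le_mul_of_nonneg_left
                    (mul_le_mul_of_nonneg_right (hC u hu i) (abs_nonneg _)) hCj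
              _ = C ^ j * C * |y - y'| := by ring
          refine le_trans (Finset.sum_le_sum fun i _ => hterm i) ?_
          rw [Finset.sum_const, Finset.card_univ, Fintype.card_fin, nsmul_eq_mul]
          push_cast
          ring_nf
          exact le_rfl
        calc (1/((d:ℝ)+1)) * |sInf _ - sInf _|
            ≤ (1/((d:ℝ)+1)) * (((d:ℝ)+1) * (C ^ (j+1) * |y - y'|)) :=
              mul_le_mul_of_nonneg_left hdiff (by positivity)
          _ = C ^ (j+1) * |y - y'| := by field_simp
  have Hcont : ∀ k, k ≤ n → ∀ ω, Continuous fun y : ℝ => H k y ω := by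
    intro k hk ω
    have hlip := HLip (n - k) k (by omega)
    refine (LipschitzWith.of_dist_le_mul (K := (C ^ (n-k)).toNNReal) ?_).continuous
    intro y y'
    rw [Real.dist_eq, Real.dist_eq, Real.coe_toNNReal _ (by positivity)]
    exact hlip y y' ω
  have hmin : ∀ k (hk : k < n) (y : ℝ) (ω : Fin n → Fin (d+1)),
      ∃ u, u ∈ K ∧ (∑ i : Fin (d+1),
          H (k+1) (y * (1 + ∑ j, u j * wn i j)) (Function.update ω ⟨k, hk⟩ i))
        = sInf {z : ℝ | ∃ u ∈ K, z = ∑ i : Fin (d+1),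
            H (k+1) (y * (1 + ∑ j, u j * wn i j)) (Function.update ω ⟨k, hk⟩ i)} := by
    intro k hk y ω
    have hcont : Continuous fun u : Fin d → ℝ => ∑ i : Fin (d+1),
        H (k+1) (y * (1 + ∑ j, u j * wn i j)) (Function.update ω ⟨k, hk⟩ i) := by
      refine continuous_finset_sum _ fun i _ => ?_
      exact (Hcont (k+1) hk _).comp
        (continuous_const.mul (continuous_const.add
          (continuous_finset_sum _ fun j _ => (continuous_apply j).mul continuous_const)))
    obtain ⟨um, humK, hum⟩ := hKcomp.exists_isMinOn ⟨u₀, hu₀K⟩ hcont.continuousOn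
    refine ⟨um, humK, le_antisymm ?_ (csInf_le (hbdd k hk y ω) ⟨um, humK, rfl⟩)⟩
    refine le_csInf ⟨_, u₀, hu₀K, rfl⟩ ?_
    rintro z ⟨u, hu, rfl⟩
    exact hum hu
  -- the integral of any function is the normalized sum
  have hμuniv : μ Set.univ = 1 := by
    rw [hμ]
    simp only [Measure.smul_apply, Measure.count_univ, ENat.card_eq_coe_fintype_card,
      ENat.toENNReal_coe, smul_eq_mul, Fintype.card_fun,
      Fintype.card_fin]
    push_cast
    rw [ENNReal.inv_mul_cancel]
    · exact pow_ne_zero _ (by simp)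
    · exact ENNReal.pow_ne_top (by simp)
  haveI hprob : IsProbabilityMeasure μ := ⟨hμuniv⟩
  have hμpt : ∀ ωpt : Fin n → Fin (d+1), (μ {ωpt}).toReal = (((d:ℝ)+1) ^ n)⁻¹ := by
    intro ωpt
    have hbase : ((d : ℝ≥0∞) + 1).toReal = (d:ℝ) + 1 := by
      rw [ENNReal.toReal_add (by simp) (by simp)]
      simp
    rw [hμ]
    simp only [Measure.smul_apply, Measure.count_singleton, smul_eq_mul, mul_one]
    rw [ENNReal.toReal_inv, ENNReal.toReal_pow, hbase]
  have hint : ∀ f : (Fin n → Fin (d+1)) → ℝ,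
      ∫ ω, f ω ∂μ = (((d:ℝ)+1) ^ n)⁻¹ * ∑ ω : Fin n → Fin (d+1), f ω := by
    intro f
    rw [integral_fintype (Integrable.of_finite)]
    rw [Finset.mul_sum]
    refine Finset.sum_congr rfl fun ωpt _ => ?_
    rw [Measure.real_def, hμpt ωpt, smul_eq_mul]
  have hcard : (Fintype.card (Fin n → Fin (d+1)) : ℝ) = ((d:ℝ)+1) ^ n := by
    rw [Fintype.card_fun]
    simp
  -- the averaging identity
  have havg : ∀ (ρ : ℕ → (Fin n → Fin (d+1)) → Fin d → ℝ)
      (V : ℕ → (Fin n → Fin (d+1)) → ℝ)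
      (τ : (Fin n → Fin (d+1)) → ℕ) (k : ℕ) (hk : k < n),
      (∀ ω ω', (∀ i : Fin n, (i:ℕ) < k → ω i = ω' i) → ρ k ω = ρ k ω') →
      (∀ ω ω', (∀ i : Fin n, (i:ℕ) < k → ω i = ω' i) → V k ω = V k ω') →
      (∀ ω, V (k+1) ω = V k ω * (1 + ∑ j, ρ k ω j * wn (ω ⟨k, hk⟩) j)) →
      (∀ ω ω', (∀ i : Fin n, (i:ℕ) < k → ω i = ω' i) → (τ ω ≤ k ↔ τ ω' ≤ k)) →
      ∑ ω : Fin n → Fin (d+1), (if τ ω ≤ k then 0 else H (k+1) (V (k+1) ω) ω)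
        = (1/((d:ℝ)+1)) * ∑ ω : Fin n → Fin (d+1), (if τ ω ≤ k then 0 else
            ∑ i : Fin (d+1), H (k+1) (V k ω * (1 + ∑ j, ρ k ω j * wn i j))
              (Function.update ω ⟨k, hk⟩ i)) := by
    intro ρ V τ k hk hρinv hVinv hVrec hτinv
    have hupdag : ∀ (ω : Fin n → Fin (d+1)) (i : Fin (d+1)) (i' : Fin n), (i':ℕ) < k →
        Function.update ω ⟨k, hk⟩ i i' = ω i' := by
      intro ω i i' hi'
      refine Function.update_of_ne ?_ _ _
      intro hc
      rw [hc] at hi'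
      simp at hi'
    have key : ∀ (ω : Fin n → Fin (d+1)) (i : Fin (d+1)),
        (if τ (Function.update ω ⟨k, hk⟩ i) ≤ k then 0 else
          H (k+1) (V (k+1) (Function.update ω ⟨k, hk⟩ i)) (Function.update ω ⟨k, hk⟩ i))
        = (if τ ω ≤ k then 0 else
          H (k+1) (V k ω * (1 + ∑ j, ρ k ω j * wn i j)) (Function.update ω ⟨k, hk⟩ i)) := by
      intro ω i
      have hag : ∀ i' : Fin n, (i':ℕ) < k → Function.update ω ⟨k, hk⟩ i i' = ω i' := hupdag ω i
      have hτ : (τ (Function.update ω ⟨k, hk⟩ i) ≤ k) ↔ (τ ω ≤ k) := hτinv _ _ hag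
      have hV : V (k+1) (Function.update ω ⟨k, hk⟩ i)
          = V k ω * (1 + ∑ j, ρ k ω j * wn i j) := by
        rw [hVrec, hVinv _ _ hag, hρinv _ _ hag, Function.update_self]
      rw [hV]
      by_cases h : τ ω ≤ k
      · simp [hτ, h]
      · simp [hτ, h]
    have h1 : ((d:ℝ)+1) * ∑ ω : Fin n → Fin (d+1),
          (if τ ω ≤ k then 0 else H (k+1) (V (k+1) ω) ω)
        = ∑ ω : Fin n → Fin (d+1), (if τ ω ≤ k then (0:ℝ) else
            ∑ i : Fin (d+1), H (k+1) (V k ω * (1 + ∑ j, ρ k ω j * wn i j))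
              (Function.update ω ⟨k, hk⟩ i)) := by
      rw [← aux_sum_update (⟨k, hk⟩ : Fin n)
        (fun ω => if τ ω ≤ k then 0 else H (k+1) (V (k+1) ω) ω)]
      refine Finset.sum_congr rfl fun ω _ => ?_
      rw [Finset.sum_congr rfl fun i _ => key ω i]
      by_cases h : τ ω ≤ k
      · simp [h]
      · simp [h]
    rw [← h1, ← mul_assoc, one_div, inv_mul_cancel₀ (ne_of_gt hd1), one_mul]
  constructor
  · -- part 1 : lower bound for every admissible strategy
    intro ρ V hρmeas hρK hV0ex hVrec
    obtain ⟨x₀, hx₀, hV0⟩ := hV0ex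
    have hρinv : ∀ k ω ω', (∀ i : Fin n, (i:ℕ) < k → ω i = ω' i) → ρ k ω = ρ k ω' := by
      intro k ω ω' hag
      have hmeasset : MeasurableSet[ℱ k] (ρ k ⁻¹' {ρ k ω}) :=
        hρmeas k (measurableSet_singleton _)
      have hiff := aux_inv_of_meas (ℱ k) (hℱ k) _ hmeasset ω ω' hag
      have hmem : ω ∈ ρ k ⁻¹' {ρ k ω} := rfl
      have := hiff.mp hmem
      simpa using this.symm
    have hVinv : ∀ k, k ≤ n → ∀ ω ω',
        (∀ i : Fin n, (i:ℕ) < k → ω i = ω' i) → V k ω = V k ω' := by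
      intro k
      induction k with
      | zero => intro _ ω ω' _; rw [hV0, hV0]
      | succ k ih =>
        intro hk ω ω' hag
        have hkn : k < n := hk
        have hagk : ∀ i : Fin n, (i:ℕ) < k → ω i = ω' i := fun i hi => hag i (by omega)
        rw [hVrec k hkn, hVrec k hkn, ih (by omega) ω ω' hagk, hρinv k ω ω' hagk,
          hag ⟨k, hkn⟩ (by simp)]
    set Q : ℕ → (Fin n → Fin (d+1)) → Prop :=
      fun j ω => n ≤ j ∨ H j (V j ω) ω ≤ max (Y j ω - V j ω) 0 with hQdef
    have hQex : ∀ ω, ∃ j, Q j ω := fun ω => ⟨n, Or.inl le_rfl⟩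
    set τ : (Fin n → Fin (d+1)) → ℕ := fun ω => Nat.find (hQex ω) with hτdef
    have hτle : ∀ ω, τ ω ≤ n := fun ω => Nat.find_le (Or.inl le_rfl)
    have hτQ : ∀ ω, Q (τ ω) ω := fun ω => Nat.find_spec (hQex ω)
    have hτmin : ∀ ω j, j < τ ω → ¬ Q j ω := fun ω j hj => Nat.find_min (hQex ω) hj
    have hQn : ∀ j, j ≤ n → ∀ ω, Q j ω → max (Y j ω - V j ω) 0 = H j (V j ω) ω := by
      intro j hj ω hQ
      rcases eq_or_lt_of_le hj with h | h
      · subst h; rw [hHn]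
      · rcases hQ with h' | h'
        · omega
        · exact le_antisymm (hHge j hj _ ω) h'
    have hQinv : ∀ j, j < n → ∀ ω ω',
        (∀ i : Fin n, (i:ℕ) < j → ω i = ω' i) → (Q j ω ↔ Q j ω') := by
      intro j hj ω ω' hag
      have h1 : V j ω = V j ω' := hVinv j (le_of_lt hj) ω ω' hag
      have h2 : Y j ω = Y j ω' := hYad j (le_of_lt hj) ω ω' hag
      have h3 : H j (V j ω) ω = H j (V j ω') ω' := by
        rw [h1]; exact Hdep (n - j) j (by omega) _ ω ω' hag
      simp only [hQdef]
      rw [h3, h2, h1]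
    have hτinvle : ∀ k, ∀ ω ω', (∀ i : Fin n, (i:ℕ) < k → ω i = ω' i) →
        (τ ω ≤ k ↔ τ ω' ≤ k) := by
      intro k ω ω' hag
      rcases le_or_gt n k with h | h
      · simp [le_trans (hτle ω) h, le_trans (hτle ω') h]
      · simp only [hτdef, Nat.find_le_iff]
        refine exists_congr fun j => and_congr_right fun hj => ?_
        exact hQinv j (by omega) ω ω' (fun i hi => hag i (by omega))
    have hτstop : IsStoppingTime ℱ (fun ω => (τ ω : WithTop ℕ)) := by
      intro k
      refine aux_meas_of_inv (ℱ k) (hℱ k) _ ?_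
      intro ω ω' hag h
      have h' : τ ω ≤ k := by simpa using h
      simpa using (hτinvle k ω ω' hag).mp h'
    refine ⟨τ, hτstop, hτle, ?_⟩
    set A : (Fin n → Fin (d+1)) → ℝ := fun ω => max (Y (τ ω) ω - V (τ ω) ω) 0 with hAdef
    set G : ℕ → (Fin n → Fin (d+1)) → ℝ :=
      fun k ω => if τ ω ≤ k then A ω else H k (V k ω) ω with hGdef
    have hstep : ∀ k, k < n →
        ∑ ω : Fin n → Fin (d+1), G k ω ≤ ∑ ω : Fin n → Fin (d+1), G (k+1) ω := by
      intro k hk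
      have hsplitk : ∑ ω : Fin n → Fin (d+1), G k ω
          = (∑ ω : Fin n → Fin (d+1), if τ ω ≤ k then A ω else 0)
            + ∑ ω : Fin n → Fin (d+1), (if τ ω ≤ k then 0 else H k (V k ω) ω) := by
        rw [← Finset.sum_add_distrib]
        refine Finset.sum_congr rfl fun ω _ => ?_
        by_cases h : τ ω ≤ k <;> simp [hGdef, h]
      have hsplitk1 : ∑ ω : Fin n → Fin (d+1), G (k+1) ω
          = (∑ ω : Fin n → Fin (d+1), if τ ω ≤ k then A ω else 0)
            + ∑ ω : Fin n → Fin (d+1), (if τ ω ≤ k then 0 else H (k+1) (V (k+1) ω) ω) := by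
        rw [← Finset.sum_add_distrib]
        refine Finset.sum_congr rfl fun ω _ => ?_
        by_cases h : τ ω ≤ k
        · simp [hGdef, h, le_trans h (Nat.le_succ k)]
        · simp only [hGdef, if_neg h]
          by_cases h2 : τ ω ≤ k + 1
          · have hτeq : τ ω = k + 1 := le_antisymm h2 (by omega)
            rw [if_pos h2]
            have hq := hτQ ω
            rw [hτeq] at hq
            have heq := hQn (k+1) hk ω hq
            simp only [hAdef, hτeq]
            rw [heq]
            ring
          · rw [if_neg h2]
            ring
      have hcore : ∑ ω : Fin n → Fin (d+1), (if τ ω ≤ k then 0 else H k (V k ω) ω)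
          ≤ ∑ ω : Fin n → Fin (d+1), (if τ ω ≤ k then 0 else H (k+1) (V (k+1) ω) ω) := by
        rw [havg ρ V τ k hk (hρinv k) (hVinv k (le_of_lt hk)) (fun ω => hVrec k hk ω)
          (hτinvle k), Finset.mul_sum]
        refine Finset.sum_le_sum fun ω _ => ?_
        by_cases h : τ ω ≤ k
        · simp [h]
        · simp only [if_neg h]
          have hnQ := hτmin ω k (by omega)
          simp only [hQdef, not_or, not_le] at hnQ
          obtain ⟨-, hmaxlt⟩ := hnQ
          have hHeq : H k (V k ω) ω = (1/((d:ℝ)+1)) * sInf {z : ℝ | ∃ u ∈ K, z =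
              ∑ i : Fin (d+1), H (k+1) ((V k ω) * (1 + ∑ j, u j * wn i j))
                (Function.update ω ⟨k, hk⟩ i)} := by
            have hmx := hHk k hk (V k ω) ω
            rcases max_choice (max (Y k ω - V k ω) 0) ((1/((d:ℝ)+1)) * sInf {z : ℝ | ∃ u ∈ K, z =
              ∑ i : Fin (d+1), H (k+1) ((V k ω) * (1 + ∑ j, u j * wn i j))
                (Function.update ω ⟨k, hk⟩ i)}) with hmc | hmc
            · rw [hmx] at hmaxlt
              rw [hmc] at hmaxlt
              exact absurd hmaxlt (lt_irrefl _)
            · rw [hmx, hmc]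
          rw [hHeq]
          refine mul_le_mul_of_nonneg_left ?_ (by positivity)
          exact csInf_le (hbdd k hk (V k ω) ω) ⟨ρ k ω, hρK k ω, rfl⟩
      rw [hsplitk, hsplitk1]
      exact add_le_add (le_refl _) hcore
    have hchain : ∀ m, m ≤ n →
        ∑ ω : Fin n → Fin (d+1), G 0 ω ≤ ∑ ω : Fin n → Fin (d+1), G m ω := by
      intro m
      induction m with
      | zero => intro _; exact le_rfl
      | succ m ih => intro hm; exact le_trans (ih (by omega)) (hstep m (by omega))
    have hGn : ∀ ω, G n ω = A ω := fun ω => if_pos (hτle ω)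
    have hG0 : ∀ ω, G 0 ω = H 0 (V 0 ω) ω := by
      intro ω
      by_cases h : τ ω ≤ 0
      · have hτ0 : τ ω = 0 := Nat.le_zero.mp h
        have hq := hτQ ω
        rw [hτ0] at hq
        have heq := hQn 0 (by omega) ω hq
        simp only [hGdef, if_pos h, hAdef, hτ0]
        exact heq
      · simp [hGdef, h]
    have hG0' : ∀ ω, H 0 x (fun _ => 0) ≤ G 0 ω := by
      intro ω
      rw [hG0 ω, hV0 ω]
      have h1 : H 0 x ω ≤ H 0 x₀ ω := Hmono n 0 (by omega) x₀ x ω hx₀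
      have h2 : H 0 x (fun _ => (0 : Fin (d+1))) = H 0 x ω :=
        Hdep n 0 (by omega) x _ ω (fun i hi => absurd hi (by omega))
      rw [← h2] at h1
      exact h1
    rw [hint]
    have h1 : ∑ ω : Fin n → Fin (d+1), A ω = ∑ ω : Fin n → Fin (d+1), G n ω :=
      Finset.sum_congr rfl fun ω _ => (hGn ω).symm
    have h2 : (((d:ℝ)+1) ^ n) * H 0 x (fun _ => 0) ≤ ∑ ω : Fin n → Fin (d+1), G 0 ω := by
      calc (((d:ℝ)+1) ^ n) * H 0 x (fun _ => 0)
          = ∑ _ω : Fin n → Fin (d+1), H 0 x (fun _ => 0) := by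
            rw [Finset.sum_const, Finset.card_univ, nsmul_eq_mul, hcard]
        _ ≤ ∑ ω : Fin n → Fin (d+1), G 0 ω := Finset.sum_le_sum fun ω _ => hG0' ω
    have h3 : (((d:ℝ)+1) ^ n) * H 0 x (fun _ => 0) ≤ ∑ ω : Fin n → Fin (d+1), A ω := by
      rw [h1]
      exact le_trans h2 (hchain n le_rfl)
    have hpow : (0:ℝ) < ((d:ℝ)+1) ^ n := by positivity
    calc H 0 x (fun _ => 0)
        = (((d:ℝ)+1) ^ n)⁻¹ * ((((d:ℝ)+1) ^ n) * H 0 x (fun _ => 0)) := by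
          field_simp
      _ ≤ (((d:ℝ)+1) ^ n)⁻¹ * ∑ ω : Fin n → Fin (d+1), A ω :=
          mul_le_mul_of_nonneg_left h3 (by positivity)
  · -- part 2 : the minimizing strategy
    choose! g hgK hgmin using hmin
    set tr : ℕ → (Fin n → Fin (d+1)) → (Fin n → Fin (d+1)) :=
      fun k ω i => if (i:ℕ) < k then ω i else 0 with htrdef
    set V : ℕ → (Fin n → Fin (d+1)) → ℝ := fun k => Nat.rec (fun _ => x)
      (fun k Vk ω => if h : k < n then
        Vk ω * (1 + ∑ j, g k (Vk (tr k ω)) (tr k ω) j * wn (ω ⟨k, h⟩) j) else Vk ω) k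
      with hVdef
    set ρ : ℕ → (Fin n → Fin (d+1)) → Fin d → ℝ :=
      fun k ω => if h : k < n then g k (V k (tr k ω)) (tr k ω) else u₀ with hρdef
    have hVzero : ∀ ω, V 0 ω = x := fun ω => rfl
    have hVsucc : ∀ k ω, V (k+1) ω = if h : k < n then
        V k ω * (1 + ∑ j, g k (V k (tr k ω)) (tr k ω) j * wn (ω ⟨k, h⟩) j) else V k ω :=
      fun k ω => rfl
    have htrag : ∀ k (ω ω' : Fin n → Fin (d+1)),
        (∀ i : Fin n, (i:ℕ) < k → ω i = ω' i) → tr k ω = tr k ω' := by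
      intro k ω ω' hag
      funext i
      simp only [htrdef]
      by_cases h : (i:ℕ) < k
      · simp [h, hag i h]
      · simp [h]
    have hVinv : ∀ k ω ω', (∀ i : Fin n, (i:ℕ) < k → ω i = ω' i) → V k ω = V k ω' := by
      intro k
      induction k with
      | zero => intro ω ω' _; rfl
      | succ k ih =>
        intro ω ω' hag
        have hagk : ∀ i : Fin n, (i:ℕ) < k → ω i = ω' i := fun i hi => hag i (by omega)
        rw [hVsucc, hVsucc, ih ω ω' hagk, htrag k ω ω' hagk]
        by_cases h : k < n
        · rw [dif_pos h, dif_pos h, hag ⟨k, h⟩ (by simp)]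
        · rw [dif_neg h, dif_neg h]
    have htr_ag : ∀ k (ω : Fin n → Fin (d+1)) (i : Fin n), (i:ℕ) < k → tr k ω i = ω i := by
      intro k ω i hi
      simp [htrdef, hi]
    have hVtr : ∀ k ω, V k (tr k ω) = V k ω := by
      intro k ω
      exact hVinv k _ _ (fun i hi => htr_ag k ω i hi)
    have hρK' : ∀ k ω, ρ k ω ∈ K := by
      intro k ω
      simp only [hρdef]
      by_cases h : k < n
      · rw [dif_pos h]; exact hgK k h _ _
      · rw [dif_neg h]; exact hu₀K
    have hρinv : ∀ k ω ω', (∀ i : Fin n, (i:ℕ) < k → ω i = ω' i) → ρ k ω = ρ k ω' := by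
      intro k ω ω' hag
      simp only [hρdef, htrag k ω ω' hag]
    have hρmeas : ∀ k, Measurable[ℱ k] (ρ k) := by
      intro k s hs
      refine aux_meas_of_inv (ℱ k) (hℱ k) _ ?_
      intro ω ω' hag hm
      have hr := hρinv k ω ω' hag
      simpa [Set.mem_preimage, ← hr] using hm
    have hVrec : ∀ k (hk : k < n), ∀ ω,
        V (k+1) ω = V k ω * (1 + ∑ j, ρ k ω j * wn (ω ⟨k, hk⟩) j) := by
      intro k hk ω
      rw [hVsucc, dif_pos hk]
      simp only [hρdef, dif_pos hk]
    have hminprop : ∀ k (hk : k < n), ∀ ω,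
        (∑ i : Fin (d+1), H (k+1) (V k ω * (1 + ∑ j, ρ k ω j * wn i j))
            (Function.update ω ⟨k, hk⟩ i))
          = sInf {z : ℝ | ∃ u ∈ K, z = ∑ i : Fin (d+1),
              H (k+1) (V k ω * (1 + ∑ j, u j * wn i j)) (Function.update ω ⟨k, hk⟩ i)} := by
      intro k hk ω
      have hupd : ∀ (z : ℝ) (i : Fin (d+1)),
          H (k+1) z (Function.update (tr k ω) ⟨k, hk⟩ i)
            = H (k+1) z (Function.update ω ⟨k, hk⟩ i) := by
        intro z i
        refine Hdep (n - (k+1)) (k+1) (by omega) z _ _ ?_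
        intro i' hi'
        by_cases hik : i' = (⟨k, hk⟩ : Fin n)
        · subst hik; simp
        · rw [Function.update_of_ne hik, Function.update_of_ne hik]
          have hik' : (i':ℕ) ≠ k := fun hc => hik (Fin.ext hc)
          exact htr_ag k ω i' (by omega)
      have hgm := hgmin k hk (V k (tr k ω)) (tr k ω)
      rw [hVtr k ω] at hgm
      have hset : {z : ℝ | ∃ u ∈ K, z = ∑ i : Fin (d+1),
            H (k+1) (V k ω * (1 + ∑ j, u j * wn i j)) (Function.update (tr k ω) ⟨k, hk⟩ i)}
          = {z : ℝ | ∃ u ∈ K, z = ∑ i : Fin (d+1),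
            H (k+1) (V k ω * (1 + ∑ j, u j * wn i j)) (Function.update ω ⟨k, hk⟩ i)} := by
        ext z
        constructor
        · rintro ⟨u, hu, rfl⟩
          exact ⟨u, hu, Finset.sum_congr rfl fun i _ => hupd _ i⟩
        · rintro ⟨u, hu, rfl⟩
          exact ⟨u, hu, Finset.sum_congr rfl fun i _ => (hupd _ i).symm⟩
      rw [hset] at hgm
      simp only [hρdef, dif_pos hk, hVtr k ω]
      rw [← hgm]
      exact Finset.sum_congr rfl fun i _ => (hupd _ i).symm
    refine ⟨ρ, V, hρmeas, hρK', hVzero, hVrec, hminprop, ?_⟩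
    intro τ hτstop hτle
    have hτinvle : ∀ k, ∀ ω ω', (∀ i : Fin n, (i:ℕ) < k → ω i = ω' i) →
        (τ ω ≤ k ↔ τ ω' ≤ k) := by
      intro k ω ω' hag
      have := aux_inv_of_meas (ℱ k) (hℱ k) _ (hτstop k) ω ω' hag
      simpa using this
    set A : (Fin n → Fin (d+1)) → ℝ := fun ω => max (Y (τ ω) ω - V (τ ω) ω) 0 with hAdef
    set G : ℕ → (Fin n → Fin (d+1)) → ℝ :=
      fun k ω => if τ ω ≤ k then A ω else H k (V k ω) ω with hGdef
    have hstep : ∀ k, k < n →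
        ∑ ω : Fin n → Fin (d+1), G (k+1) ω ≤ ∑ ω : Fin n → Fin (d+1), G k ω := by
      intro k hk
      have hsplitk : ∑ ω : Fin n → Fin (d+1), G k ω
          = (∑ ω : Fin n → Fin (d+1), if τ ω ≤ k then A ω else 0)
            + ∑ ω : Fin n → Fin (d+1), (if τ ω ≤ k then 0 else H k (V k ω) ω) := by
        rw [← Finset.sum_add_distrib]
        refine Finset.sum_congr rfl fun ω _ => ?_
        by_cases h : τ ω ≤ k <;> simp [hGdef, h]
      have hsplitk1 : ∑ ω : Fin n → Fin (d+1), G (k+1) ω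
          ≤ (∑ ω : Fin n → Fin (d+1), if τ ω ≤ k then A ω else 0)
            + ∑ ω : Fin n → Fin (d+1), (if τ ω ≤ k then 0 else H (k+1) (V (k+1) ω) ω) := by
        rw [← Finset.sum_add_distrib]
        refine Finset.sum_le_sum fun ω _ => ?_
        by_cases h : τ ω ≤ k
        · simp [hGdef, h, le_trans h (Nat.le_succ k)]
        · simp only [hGdef, if_neg h]
          by_cases h2 : τ ω ≤ k + 1
          · have hτeq : τ ω = k + 1 := le_antisymm h2 (by omega)
            rw [if_pos h2]
            have hA : A ω ≤ H (k+1) (V (k+1) ω) ω := by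
              simp only [hAdef, hτeq]
              exact hHge (k+1) hk _ ω
            linarith
          · rw [if_neg h2]
            simp
      have hcore : ∑ ω : Fin n → Fin (d+1), (if τ ω ≤ k then 0 else H (k+1) (V (k+1) ω) ω)
          ≤ ∑ ω : Fin n → Fin (d+1), (if τ ω ≤ k then 0 else H k (V k ω) ω) := by
        rw [havg ρ V τ k hk (hρinv k) (hVinv k) (fun ω => hVrec k hk ω) (hτinvle k),
          Finset.mul_sum]
        refine Finset.sum_le_sum fun ω _ => ?_
        by_cases h : τ ω ≤ k
        · simp [h]
        · simp only [if_neg h]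
          rw [hminprop k hk ω, hHk k hk (V k ω) ω]
          exact le_max_right _ _
      calc ∑ ω : Fin n → Fin (d+1), G (k+1) ω
          ≤ (∑ ω : Fin n → Fin (d+1), if τ ω ≤ k then A ω else 0)
            + ∑ ω : Fin n → Fin (d+1), (if τ ω ≤ k then 0 else H (k+1) (V (k+1) ω) ω) :=
            hsplitk1
        _ ≤ (∑ ω : Fin n → Fin (d+1), if τ ω ≤ k then A ω else 0)
            + ∑ ω : Fin n → Fin (d+1), (if τ ω ≤ k then 0 else H k (V k ω) ω) :=
            add_le_add (le_refl _) hcore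
        _ = ∑ ω : Fin n → Fin (d+1), G k ω := hsplitk.symm
    have hchain : ∀ m, m ≤ n →
        ∑ ω : Fin n → Fin (d+1), G m ω ≤ ∑ ω : Fin n → Fin (d+1), G 0 ω := by
      intro m
      induction m with
      | zero => intro _; exact le_rfl
      | succ m ih => intro hm; exact le_trans (hstep m (by omega)) (ih (by omega))
    have hGn : ∀ ω, G n ω = A ω := fun ω => if_pos (hτle ω)
    have hG0 : ∀ ω, G 0 ω ≤ H 0 x (fun _ => 0) := by
      intro ω
      have h2 : H 0 x (fun _ => (0 : Fin (d+1))) = H 0 x ω :=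
        Hdep n 0 (by omega) x _ ω (fun i hi => absurd hi (by omega))
      rw [h2]
      by_cases h : τ ω ≤ 0
      · have hτ0 : τ ω = 0 := Nat.le_zero.mp h
        simp only [hGdef, if_pos h, hAdef, hτ0]
        rw [hVzero ω]
        exact hHge 0 (by omega) x ω
      · simp only [hGdef, if_neg h]
        rw [hVzero ω]
    rw [hint]
    have h3 : ∑ ω : Fin n → Fin (d+1), A ω ≤ (((d:ℝ)+1) ^ n) * H 0 x (fun _ => 0) := by
      calc ∑ ω : Fin n → Fin (d+1), A ω = ∑ ω : Fin n → Fin (d+1), G n ω :=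
            Finset.sum_congr rfl fun ω _ => (hGn ω).symm
        _ ≤ ∑ ω : Fin n → Fin (d+1), G 0 ω := hchain n le_rfl
        _ ≤ ∑ _ω : Fin n → Fin (d+1), H 0 x (fun _ => 0) :=
            Finset.sum_le_sum fun ω _ => hG0 ω
        _ = (((d:ℝ)+1) ^ n) * H 0 x (fun _ => 0) := by
            rw [Finset.sum_const, Finset.card_univ, nsmul_eq_mul, hcard]
    calc (((d:ℝ)+1) ^ n)⁻¹ * ∑ ω : Fin n → Fin (d+1), A ω
        ≤ (((d:ℝ)+1) ^ n)⁻¹ * ((((d:ℝ)+1) ^ n) * H 0 x (fun _ => 0)) :=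
          mul_le_mul_of_nonneg_left h3 (by positivity)
      _ = H 0 x (fun _ => 0) := by field_simp
end
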